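/- (Proposition 4.1) Let d ≥ 1, n ≥ 1, r > 0. Let f^dis : ℤ^d → M(n,ℂ) vanish outside B_r ∩ ℤ^d, let w : ℤ^d → (0,∞), and for each z ∈ B_r ∩ ℤ^d let ρ_z > 0 be such that the closed balls B̄(z, ρ_z), z ∈ B_r ∩ ℤ^d, are pairwise disjoint. Define f : ℝ^d → M(n,ℂ) by f(x) = Σ_{z ∈ B_r ∩ ℤ^d} w(z) f^dis(z) 𝟙_{B̄(z,ρ_z)}(x). Let x_0 ∈ ℝ^d, θ ∈ S^{d-1}, and suppose the line γ = {x_0 + sθ : s ∈ ℝ} satisfies: for every z ∈ B_r ∩ ℤ^d, either z ∈ γ or γ ∩ B̄(z, ρ_z) = ∅. Then there exist R > 0 and a continuous function ψ : ℝ → M(n,ℂ) such that ψ is differentiable at all but finitely many s ∈ ℝ with derivative ψ'(s) = f(x_0 + sθ) · ψ(s), ψ(s) = I for all s ≤ −R, and for all s ≥ R, ψ(s) equals the ordered product of exp(2 ρ_z w(z) f^dis(z)) over the points z ∈ γ ∩ B_r ∩ ℤ^d, multiplied so that the point z with the largest parameter (z − x_0)·θ contributes the leftmost factor. -/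

import Mathlib

noncomputable section

open Matrix

/-- Embedding of the lattice `ℤ^d` into Euclidean `ℝ^d`. -/
def emb {d : ℕ} (z : Fin d → ℤ) : EuclideanSpace ℝ (Fin d) := WithLp.toLp 2 (fun i => (z i : ℝ))

/- Ordered product of `Φ` over `supp`: the factors are multiplied so that larger values
of `key` contribute factors further to the left (the value is `1` if no strictly
`key`-decreasing enumeration of `supp` by a list exists). -/
open Classical in
noncomputable def oprodBy {α G : Type*} [Monoid G] (Φ : α → G) (key : α → ℝ) (supp : Set α) : G :=
  if h : ∃ l : List α, l.Pairwise (fun a b => key b < key a) ∧ ∀ a, a ∈ l ↔ a ∈ supp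
  then (h.choose.map Φ).prod else 1

/-- The discrete non-abelian X-ray transform of `F` along the oriented line through `x`
with direction `θ`: the ordered product of `F y` over lattice points `y` on the line,
the point furthest along the orientation contributing the leftmost factor. -/
noncomputable def discS {d : ℕ} {G : Type*} [Monoid G] (F : (Fin d → ℤ) → G)
    (x θ : EuclideanSpace ℝ (Fin d)) : G :=
  oprodBy F (fun z => ∑ i, ((z i : ℝ) - x i) * θ i)
    {z | (∃ t : ℝ, emb z = x + t • θ) ∧ F z ≠ 1}

/-! ### Auxiliary lemmas -/

section Aux

open NormedSpace Filter

variable {n : ℕ}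

lemma coe_smul_mat (u : ℝ) (A : Matrix (Fin n) (Fin n) ℂ) : (u : ℂ) • A = u • A := by
  ext i j; simp [Matrix.smul_apply, Complex.real_smul]

lemma lemA (A C : Matrix (Fin n) (Fin n) ℂ) (c : ℝ) (i j : Fin n) :
    HasDerivAt (fun u : ℝ => ((exp ((u : ℂ) • A)) * C) i j)
      (((A * exp ((c : ℂ) • A)) * C) i j) c := by
  letI : NormedRing (Matrix (Fin n) (Fin n) ℂ) := Matrix.linftyOpNormedRing
  letI : NormedAlgebra ℝ (Matrix (Fin n) (Fin n) ℂ) := Matrix.linftyOpNormedAlgebra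
  have h : HasDerivAt (fun u : ℝ => exp (u • A)) (A * exp (c • A)) c :=
    hasDerivAt_exp_smul_const' A c
  have h2 : HasDerivAt (fun u : ℝ => exp (u • A) * C) (A * exp (c • A) * C) c :=
    h.mul_const C
  have hL : HasDerivAt (fun u : ℝ => (exp (u • A) * C) i j) ((A * exp (c • A) * C) i j) c := by
    let L : Matrix (Fin n) (Fin n) ℂ →L[ℝ] ℂ :=
      { toFun := fun M => M i j
        map_add' := by intros; simp
        map_smul' := by intros; simp
        cont := (continuous_apply j).comp (continuous_apply i) }
    exact (L.hasFDerivAt.comp_hasDerivAt c h2)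
  simp only [coe_smul_mat]
  exact hL

lemma contA (A : Matrix (Fin n) (Fin n) ℂ) {g : ℝ → ℝ} (hg : Continuous g) :
    Continuous (fun s : ℝ => exp ((g s : ℂ) • A)) := by
  letI : NormedRing (Matrix (Fin n) (Fin n) ℂ) := Matrix.linftyOpNormedRing
  letI : NormedAlgebra ℝ (Matrix (Fin n) (Fin n) ℂ) := Matrix.linftyOpNormedAlgebra
  have : Continuous (fun s : ℝ => exp (g s • A)) :=
    (continuous_iff_continuousAt.2 fun u =>
      (hasDerivAt_exp_smul_const' (𝕂 := ℝ) A u).continuousAt).comp hg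
  simp only [coe_smul_mat]
  convert this using 2 with s

lemma listProd_evEq {ι M : Type*} [Monoid M] {F : Filter ℝ} (l : List ι) (f g : ι → ℝ → M)
    (h : ∀ z ∈ l, (f z) =ᶠ[F] (g z)) :
    (fun u => (l.map (fun z => f z u)).prod) =ᶠ[F] (fun u => (l.map (fun z => g z u)).prod) := by
  induction l with
  | nil => simp [EventuallyEq.refl]
  | cons a t ih =>
    simp only [List.map_cons, List.prod_cons]
    exact (h a (by simp)).mul (ih (fun z hz => h z (by simp [hz])))

lemma sorted_unique {α : Type*} (key : α → ℝ) (l₁ l₂ : List α)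
    (h₁ : l₁.Pairwise (fun a b => key b < key a)) (h₂ : l₂.Pairwise (fun a b => key b < key a))
    (hm : ∀ a, a ∈ l₁ ↔ a ∈ l₂) : l₁ = l₂ := by
  haveI : IsAntisymm α (fun a b => key b < key a) :=
    ⟨fun a b h h' => absurd (h.trans h') (lt_irrefl _)⟩
  have nd₁ : l₁.Nodup := h₁.imp (fun {a b} hlt => by rintro rfl; exact absurd hlt (lt_irrefl _))
  have nd₂ : l₂.Nodup := h₂.imp (fun {a b} hlt => by rintro rfl; exact absurd hlt (lt_irrefl _))
  exact List.Perm.eq_of_pairwise (fun a b _ _ h h' => absurd (h.trans h') (lt_irrefl _)) h₁ h₂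
    ((List.perm_ext_iff_of_nodup nd₁ nd₂).2 hm)

lemma oprodBy_eq {α G : Type*} [Monoid G] (Φ : α → G) (key : α → ℝ) (S : Set α) (l : List α)
    (hl : l.Pairwise (fun a b => key b < key a)) (hmem : ∀ a, a ∈ l ↔ a ∈ S) :
    oprodBy Φ key S = (l.map Φ).prod := by
  rw [oprodBy, dif_pos ⟨l, hl, hmem⟩]
  congr 1
  have h : ∃ l' : List α, l'.Pairwise (fun a b => key b < key a) ∧ ∀ a, a ∈ l' ↔ a ∈ S :=
    ⟨l, hl, hmem⟩
  have := h.choose_spec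
  rw [sorted_unique key h.choose l this.1 hl (fun a => (this.2 a).trans (hmem a).symm)]

lemma exists_enum {α : Type*} (key : α → ℝ) (S : Set α) (hS : S.Finite)
    (hinj : ∀ a ∈ S, ∀ b ∈ S, key a = key b → a = b) :
    ∃ l : List α, l.Pairwise (fun a b => key b < key a) ∧ ∀ a, a ∈ l ↔ a ∈ S := by
  classical
  let r : α → α → Prop := fun a b => key b ≤ key a
  haveI : DecidableRel r := fun a b => inferInstanceAs (Decidable (key b ≤ key a))
  haveI : IsTotal α r := ⟨fun a b => le_total (key b) (key a)⟩
  haveI : IsTrans α r := ⟨fun a b c h h' => le_trans h' h⟩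
  let l₀ := hS.toFinset.toList
  let l := List.insertionSort r l₀
  have hp : l.Perm l₀ := List.perm_insertionSort r l₀
  have hsort : l.Pairwise r := List.pairwise_insertionSort r l₀
  have hnd : l.Nodup := hp.nodup_iff.2 (Finset.nodup_toList _)
  have hmem : ∀ a, a ∈ l ↔ a ∈ S := fun a => by
    rw [hp.mem_iff]; simp [l₀, Set.Finite.mem_toFinset]
  refine ⟨l, ?_, hmem⟩
  refine (hsort.and hnd).imp_of_mem ?_
  intro a b ha hb hab
  refine lt_of_le_of_ne hab.1 (fun he => ?_)
  exact hab.2 ((hinj b ((hmem b).1 hb) a ((hmem a).1 ha) he).symm)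

lemma abs_coord_le {d : ℕ} (x : EuclideanSpace ℝ (Fin d)) (i : Fin d) : |x i| ≤ ‖x‖ := by
  rw [EuclideanSpace.norm_eq, ← Real.sqrt_sq_eq_abs]
  apply Real.sqrt_le_sqrt
  have := Finset.single_le_sum (f := fun j => ‖x j‖ ^ 2) (fun j _ => sq_nonneg _)
    (Finset.mem_univ i)
  simpa [Real.norm_eq_abs, sq_abs] using this

lemma finite_S (d : ℕ) (r : ℝ) : Set.Finite {z : Fin d → ℤ | ‖emb z‖ ≤ r} := by
  have hsub : {z : Fin d → ℤ | ‖emb z‖ ≤ r} ⊆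
      Set.pi Set.univ (fun _ : Fin d => {m : ℤ | |m| ≤ ⌈r⌉}) := by
    intro z hz i _
    have h1 : |(z i : ℝ)| ≤ r := le_trans (by simpa [emb] using abs_coord_le (emb z) i) hz
    have : ((|z i| : ℤ) : ℝ) ≤ (⌈r⌉ : ℝ) := by
      push_cast; exact le_trans h1 (Int.le_ceil r)
    exact_mod_cast this
  exact (Set.Finite.pi (fun i => Set.finite_Icc (-⌈r⌉) ⌈r⌉ |>.subset
    (fun m hm => by simpa [abs_le] using hm))).subset hsub

lemma emb_inj {d : ℕ} : Function.Injective (emb (d := d)) := by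
  intro a b h
  funext i
  have := congrArg (fun v => v i) h
  simp [emb] at this
  exact_mod_cast this

lemma key_eq {d : ℕ} (x₀ θ : EuclideanSpace ℝ (Fin d)) (hθ : ‖θ‖ = 1) (z : Fin d → ℤ) (t : ℝ)
    (h : emb z = x₀ + t • θ) : (∑ i, ((z i : ℝ) - x₀ i) * θ i) = t := by
  have hsum : ∑ i, θ i * θ i = 1 := by
    have h2 : ‖θ‖ ^ 2 = 1 := by rw [hθ]; norm_num
    rw [EuclideanSpace.norm_eq] at h2
    rw [Real.sq_sqrt (Finset.sum_nonneg fun i _ => sq_nonneg _)] at h2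
    simpa [Real.norm_eq_abs, sq_abs, pow_two] using h2
  have hz : ∀ i, (z i : ℝ) = x₀ i + t * θ i := by
    intro i
    have := congrArg (fun v => v i) h
    simpa [emb] using this
  calc ∑ i, ((z i : ℝ) - x₀ i) * θ i = ∑ i, t * (θ i * θ i) := by
        apply Finset.sum_congr rfl; intro i _; rw [hz i]; ring
    _ = t := by rw [← Finset.mul_sum, hsum, mul_one]

lemma dist_line {d : ℕ} (x₀ θ : EuclideanSpace ℝ (Fin d)) (hθ : ‖θ‖ = 1) (s t : ℝ) :
    dist (x₀ + s • θ) (x₀ + t • θ) = |s - t| := by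
  rw [dist_eq_norm]
  have : (x₀ + s • θ) - (x₀ + t • θ) = (s - t) • θ := by
    rw [add_sub_add_left_eq_sub, ← sub_smul]
  rw [this, norm_smul, hθ, mul_one, Real.norm_eq_abs]

lemma foldr_max_le {α : Type*} (g : α → ℝ) (l : List α) :
    ∀ z ∈ l, g z ≤ l.foldr (fun z m => max (g z) m) 0 := by
  induction l with
  | nil => simp
  | cons a t ih =>
    intro z hz
    rcases List.mem_cons.1 hz with rfl | hz
    · exact le_max_left _ _
    · exact le_trans (ih z hz) (le_max_right _ _)

lemma foldr_max_nonneg {α : Type*} (g : α → ℝ) (l : List α) :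
    0 ≤ l.foldr (fun z m => max (g z) m) 0 := by
  induction l with
  | nil => simp
  | cons a t ih => exact le_trans ih (le_max_right _ _)

end Aux

/-- Proposition 4.1: for f a sum of regularized delta functions (matrix
coefficients times indicators of pairwise disjoint balls centered at the lattice points
of B_r), along any line which either passes through the center of a ball or misses it,
the solution ψ of dψ/ds = f(x₀ + sθ)ψ with ψ = I near −∞ exists and equals, for large s,
the ordered product of exp(2 ρ_z w(z) f^dis(z)) over the lattice points z ∈ γ ∩ B_r ∩ ℤ^d,
the point furthest along the orientation contributing the leftmost factor. -/
theorem stmt12 (d n : ℕ) (hd : 1 ≤ d) (hn : 1 ≤ n) (r : ℝ) (hr : 0 < r)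
    (fdis : (Fin d → ℤ) → Matrix (Fin n) (Fin n) ℂ)
    (hfdis : ∀ z : Fin d → ℤ, ¬ ‖emb z‖ ≤ r → fdis z = 0)
    (w : (Fin d → ℤ) → ℝ) (hw : ∀ z, 0 < w z)
    (ρ : (Fin d → ℤ) → ℝ) (hρ : ∀ z, 0 < ρ z)
    (hdisj : ∀ z₁ z₂ : Fin d → ℤ, ‖emb z₁‖ ≤ r → ‖emb z₂‖ ≤ r → z₁ ≠ z₂ →
      Disjoint (Metric.closedBall (emb z₁) (ρ z₁)) (Metric.closedBall (emb z₂) (ρ z₂)))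
    (f : EuclideanSpace ℝ (Fin d) → Matrix (Fin n) (Fin n) ℂ)
    (hf : ∀ x, f x = ∑ᶠ z ∈ {z : Fin d → ℤ | ‖emb z‖ ≤ r},
      Set.indicator (Metric.closedBall (emb z) (ρ z)) (fun _ => ((w z : ℂ)) • fdis z) x)
    (x₀ θ : EuclideanSpace ℝ (Fin d)) (hθ : ‖θ‖ = 1)
    (hline : ∀ z : Fin d → ℤ, ‖emb z‖ ≤ r →
      (∃ t : ℝ, emb z = x₀ + t • θ) ∨ ∀ s : ℝ, x₀ + s • θ ∉ Metric.closedBall (emb z) (ρ z)) :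
    ∃ R : ℝ, 0 < R ∧ ∃ ψ : ℝ → Matrix (Fin n) (Fin n) ℂ,
      Continuous ψ ∧
      (∃ E : Set ℝ, E.Finite ∧ ∀ s ∉ E, ∀ i j,
        HasDerivAt (fun u => ψ u i j) ((f (x₀ + s • θ) * ψ s) i j) s) ∧
      (∀ s ≤ -R, ψ s = 1) ∧
      (∀ s ≥ R, ψ s =
        oprodBy (fun z => NormedSpace.exp (((2 * ρ z * w z : ℝ) : ℂ) • fdis z))
          (fun z => ∑ i, ((z i : ℝ) - x₀ i) * θ i)
          {z : Fin d → ℤ | ‖emb z‖ ≤ r ∧ ∃ t : ℝ, emb z = x₀ + t • θ}) := by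
  classical
  set key : (Fin d → ℤ) → ℝ := fun z => ∑ i, ((z i : ℝ) - x₀ i) * θ i with hkeydef
  set S : Set (Fin d → ℤ) := {z : Fin d → ℤ | ‖emb z‖ ≤ r ∧ ∃ t : ℝ, emb z = x₀ + t • θ}
    with hSdef
  have hSfin : S.Finite := (finite_S d r).subset (fun z hz => hz.1)
  have honline : ∀ z ∈ S, emb z = x₀ + key z • θ := by
    intro z hz
    obtain ⟨t, ht⟩ := hz.2
    have : key z = t := key_eq x₀ θ hθ z t ht
    rw [this]; exact ht
  have hinj : ∀ a ∈ S, ∀ b ∈ S, key a = key b → a = b := by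
    intro a ha b hb he
    apply emb_inj
    rw [honline a ha, honline b hb, he]
  obtain ⟨l, hpair, hmem⟩ := exists_enum key S hSfin hinj
  have hball : ∀ z ∈ S, ∀ s : ℝ,
      (x₀ + s • θ ∈ Metric.closedBall (emb z) (ρ z)) ↔ |s - key z| ≤ ρ z := by
    intro z hz s
    rw [Metric.mem_closedBall, honline z hz, dist_line x₀ θ hθ s (key z)]
  have hsep : ∀ z₁ ∈ S, ∀ z₂ ∈ S, key z₁ < key z₂ → key z₁ + ρ z₁ < key z₂ - ρ z₂ := by
    intro z₁ h₁ z₂ h₂ hlt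
    by_contra hc
    push_neg at hc
    have hne : z₁ ≠ z₂ := fun he => absurd hlt (by rw [he]; exact lt_irrefl _)
    set s := max (key z₁ - ρ z₁) (key z₂ - ρ z₂) with hs
    have hs1 : key z₁ - ρ z₁ ≤ s := le_max_left _ _
    have hs2 : key z₂ - ρ z₂ ≤ s := le_max_right _ _
    have hs3 : s ≤ key z₁ + ρ z₁ := max_le (by linarith [hρ z₁]) (by linarith)
    have hs4 : s ≤ key z₂ + ρ z₂ := max_le (by linarith [hρ z₁, hρ z₂]) (by linarith [hρ z₂])
    have m₁ : x₀ + s • θ ∈ Metric.closedBall (emb z₁) (ρ z₁) := by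
      rw [hball z₁ h₁ s, abs_le]; constructor <;> linarith
    have m₂ : x₀ + s • θ ∈ Metric.closedBall (emb z₂) (ρ z₂) := by
      rw [hball z₂ h₂ s, abs_le]; constructor <;> linarith
    exact Set.disjoint_left.mp (hdisj z₁ z₂ h₁.1 h₂.1 hne) m₁ m₂
  set a : (Fin d → ℤ) → ℝ := fun z => key z - ρ z with hadef
  set b : (Fin d → ℤ) → ℝ := fun z => key z + ρ z with hbdef
  set A : (Fin d → ℤ) → Matrix (Fin n) (Fin n) ℂ := fun z => (w z : ℂ) • fdis z with hAdef
  set clamp : (Fin d → ℤ) → ℝ → ℝ := fun z s => max 0 (min (s - a z) (2 * ρ z)) with hclampdef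
  set φ : (Fin d → ℤ) → ℝ → Matrix (Fin n) (Fin n) ℂ :=
    fun z s => NormedSpace.exp ((clamp z s : ℂ) • A z) with hφdef
  set ψ : ℝ → Matrix (Fin n) (Fin n) ℂ := fun s => (l.map (fun z => φ z s)).prod with hψdef
  have hcl0 : ∀ z s, s ≤ a z → clamp z s = 0 := by
    intro z s h
    have h1 : min (s - a z) (2 * ρ z) ≤ 0 := le_trans (min_le_left _ _) (by linarith)
    simp [hclampdef, max_eq_left h1]
  have hcl2 : ∀ z s, b z ≤ s → clamp z s = 2 * ρ z := by
    intro z s h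
    have h1 : 2 * ρ z ≤ s - a z := by
      simp only [hadef, hbdef] at *
      linarith
    rw [hclampdef]
    simp only []
    rw [min_eq_right h1, max_eq_right (by linarith [hρ z])]
  have hclm : ∀ z s, a z ≤ s → s ≤ b z → clamp z s = s - a z := by
    intro z s h1 h2
    have h3 : s - a z ≤ 2 * ρ z := by
      simp only [hadef, hbdef] at *
      linarith
    rw [hclampdef]
    simp only []
    rw [min_eq_left h3, max_eq_right (by linarith)]
  have hφ0 : ∀ z s, s ≤ a z → φ z s = 1 := by
    intro z s h
    rw [hφdef]
    simp only []
    rw [hcl0 z s h, Complex.ofReal_zero, zero_smul]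
    exact NormedSpace.exp_zero
  -- evaluation of f along the line
  have hfval : ∀ s : ℝ, ∀ z₀ ∈ S, |s - key z₀| ≤ ρ z₀ → f (x₀ + s • θ) = A z₀ := by
    intro s z₀ hz₀ hs
    rw [hf, finsum_mem_def, finsum_eq_single _ z₀ ?_]
    · rw [Set.indicator_of_mem (show z₀ ∈ {z : Fin d → ℤ | ‖emb z‖ ≤ r} from hz₀.1)]
      rw [Set.indicator_of_mem ((hball z₀ hz₀ s).2 hs)]
    · intro z hzne
      by_cases hzr : ‖emb z‖ ≤ r
      · rw [Set.indicator_of_mem (show z ∈ {z : Fin d → ℤ | ‖emb z‖ ≤ r} from hzr)]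
        rcases hline z hzr with hon | hoff
        · have hzS : z ∈ S := ⟨hzr, hon⟩
          apply Set.indicator_of_notMem
          rw [hball z hzS s]
          intro habs
          have hkne : key z ≠ key z₀ := fun he => hzne (hinj z hzS z₀ hz₀ he)
          rcases lt_or_gt_of_ne hkne with hlt | hgt
          · have := hsep z hzS z₀ hz₀ hlt
            rw [abs_le] at habs hs
            linarith [habs.1, habs.2, hs.1, hs.2]
          · have := hsep z₀ hz₀ z hzS hgt
            rw [abs_le] at habs hs
            linarith [habs.1, habs.2, hs.1, hs.2]
        · exact Set.indicator_of_notMem (hoff s) _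
      · exact Set.indicator_of_notMem
          (show z ∉ {z : Fin d → ℤ | ‖emb z‖ ≤ r} from hzr) _
  have hfzero : ∀ s : ℝ, (∀ z ∈ S, ¬ |s - key z| ≤ ρ z) → f (x₀ + s • θ) = 0 := by
    intro s hs
    rw [hf, finsum_mem_def]
    apply finsum_eq_zero_of_forall_eq_zero
    intro z
    by_cases hzr : ‖emb z‖ ≤ r
    · rw [Set.indicator_of_mem (show z ∈ {z : Fin d → ℤ | ‖emb z‖ ≤ r} from hzr)]
      rcases hline z hzr with hon | hoff
      · exact Set.indicator_of_notMem
          (fun hmem' => hs z ⟨hzr, hon⟩ ((hball z ⟨hzr, hon⟩ s).1 hmem')) _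
      · exact Set.indicator_of_notMem (hoff s) _
    · exact Set.indicator_of_notMem
        (show z ∉ {z : Fin d → ℤ | ‖emb z‖ ≤ r} from hzr) _
  -- the bound R
  set M : ℝ := l.foldr (fun z m => max (|key z| + ρ z) m) 0 with hMdef
  have hMle : ∀ z ∈ l, |key z| + ρ z ≤ M := foldr_max_le _ l
  have hM0 : 0 ≤ M := foldr_max_nonneg _ l
  refine ⟨M + 1, by linarith, ψ, ?_, ?_, ?_, ?_⟩
  · -- continuity
    apply continuous_list_prod
    intro z _
    exact contA (A z)
      (continuous_const.max ((continuous_id.sub continuous_const).min continuous_const))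
  · -- derivative
    refine ⟨⋃ z ∈ l.toFinset, ({a z, b z} : Set ℝ), ?_, ?_⟩
    · exact Set.Finite.biUnion l.toFinset.finite_toSet
        (fun z _ => (Set.finite_singleton _).insert _)
    intro s hsE i j
    have hsE' : ∀ z ∈ l, s ≠ a z ∧ s ≠ b z := by
      intro z hz
      constructor <;> intro he <;> apply hsE <;>
        simp only [Set.mem_iUnion, Set.mem_insert_iff, Set.mem_singleton_iff]
      · exact ⟨z, List.mem_toFinset.2 hz, Or.inl he⟩
      · exact ⟨z, List.mem_toFinset.2 hz, Or.inr he⟩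
    by_cases hcase : ∃ z₀ ∈ l, s ∈ Set.Ioo (a z₀) (b z₀)
    · obtain ⟨z₀, hz₀l, hs1, hs2⟩ := hcase
      have hz₀S : z₀ ∈ S := (hmem z₀).1 hz₀l
      obtain ⟨l₁, l₂, hsplit⟩ := List.append_of_mem hz₀l
      have hpair' : (l₁ ++ z₀ :: l₂).Pairwise (fun a b => key b < key a) := hsplit ▸ hpair
      obtain ⟨p₁, p₂, psep⟩ := List.pairwise_append.1 hpair'
      have hmem₁ : ∀ z ∈ l₁, z ∈ S := fun z hz =>
        (hmem z).1 (by rw [hsplit]; exact List.mem_append.2 (Or.inl hz))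
      have hmem₂ : ∀ z ∈ l₂, z ∈ S := fun z hz =>
        (hmem z).1 (by rw [hsplit]; exact List.mem_append.2 (Or.inr (List.mem_cons_of_mem _ hz)))
      have hleft : ∀ z ∈ l₁, b z₀ < a z := by
        intro z hz
        have hk : key z₀ < key z := psep z hz z₀ List.mem_cons_self
        have := hsep z₀ hz₀S z (hmem₁ z hz) hk
        simp only [hadef, hbdef]; linarith
      have hright : ∀ z ∈ l₂, b z < a z₀ := by
        intro z hz
        have hk : key z < key z₀ := (List.pairwise_cons.1 p₂).1 z hz
        have := hsep z (hmem₂ z hz) z₀ hz₀S hk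
        simp only [hadef, hbdef]; linarith
      set C : Matrix (Fin n) (Fin n) ℂ := (l₂.map (fun z => φ z s)).prod with hCdef
      have hψu : ∀ u, ψ u =
          (l₁.map (fun z => φ z u)).prod * (φ z₀ u * (l₂.map (fun z => φ z u)).prod) := by
        intro u
        rw [hψdef]
        simp only []
        rw [hsplit, List.map_append, List.prod_append, List.map_cons, List.prod_cons]
      have hev₁ : (fun u => (l₁.map (fun z => φ z u)).prod) =ᶠ[nhds s]
          (fun _ => (1 : Matrix (Fin n) (Fin n) ℂ)) := by
        have h1 : ∀ z ∈ l₁, (fun u => φ z u) =ᶠ[nhds s] (fun _ => (1 : Matrix (Fin n) (Fin n) ℂ)) := by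
          intro z hz
          have hlt : s < a z := lt_trans hs2 (hleft z hz)
          filter_upwards [Iio_mem_nhds hlt] with u hu
          exact hφ0 z u (le_of_lt hu)
        have := listProd_evEq l₁ φ (fun _ _ => (1 : Matrix (Fin n) (Fin n) ℂ)) h1
        refine this.trans ?_
        apply Filter.Eventually.of_forall
        intro u
        simp
      have hev₂ : (fun u => (l₂.map (fun z => φ z u)).prod) =ᶠ[nhds s] (fun _ => C) := by
        apply listProd_evEq l₂ φ (fun z _ => φ z s)
        intro z hz
        have hlt : b z < s := lt_trans (hright z hz) hs1
        filter_upwards [Ioi_mem_nhds hlt] with u hu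
        rw [hφdef]
        simp only []
        rw [hcl2 z u (le_of_lt hu), hcl2 z s (le_of_lt hlt)]
      have hev₀ : (fun u => φ z₀ u) =ᶠ[nhds s]
          (fun u => NormedSpace.exp (((u - a z₀ : ℝ) : ℂ) • A z₀)) := by
        filter_upwards [Ioo_mem_nhds hs1 hs2] with u hu
        rw [hφdef]
        simp only []
        rw [hclm z₀ u (le_of_lt hu.1) (le_of_lt hu.2)]
      have hevψ : ψ =ᶠ[nhds s]
          (fun u => NormedSpace.exp (((u - a z₀ : ℝ) : ℂ) • A z₀) * C) := by
        have h0 : ψ =ᶠ[nhds s]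
            (fun u => (l₁.map (fun z => φ z u)).prod * (φ z₀ u * (l₂.map (fun z => φ z u)).prod)) :=
          Filter.Eventually.of_forall hψu
        refine h0.trans ?_
        have := hev₁.mul (hev₀.mul hev₂)
        refine this.trans ?_
        apply Filter.Eventually.of_forall
        intro u
        simp [one_mul]
      have hentry : (fun u => ψ u i j) =ᶠ[nhds s]
          (fun u => (NormedSpace.exp (((u - a z₀ : ℝ) : ℂ) • A z₀) * C) i j) :=
        hevψ.mono (fun u hu => congrArg (fun m => m i j) hu)
      have htarget : HasDerivAt
          (fun u : ℝ => (NormedSpace.exp (((u - a z₀ : ℝ) : ℂ) • A z₀) * C) i j)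
          ((A z₀ * NormedSpace.exp (((s - a z₀ : ℝ) : ℂ) • A z₀) * C) i j) s := by
        have h0 := lemA (A z₀) C (s - a z₀) i j
        have h1 : HasDerivAt (fun u : ℝ => u - a z₀) 1 s := (hasDerivAt_id s).sub_const _
        have h2 := HasDerivAt.scomp (x := s) h0 h1
        convert h2 using 1
        · rfl
        · rfl
        · simp
      have hfs : f (x₀ + s • θ) = A z₀ := by
        apply hfval s z₀ hz₀S
        rw [abs_le]
        simp only [hadef, hbdef] at hs1 hs2
        constructor <;> linarith
      have hψs : ψ s = NormedSpace.exp (((s - a z₀ : ℝ) : ℂ) • A z₀) * C :=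
        hevψ.eq_of_nhds
      rw [hfs, hψs, ← mul_assoc]
      exact htarget.congr_of_eventuallyEq hentry
    · push_neg at hcase
      have hout : ∀ z ∈ l, s < a z ∨ b z < s := by
        intro z hz
        have h1 := hcase z hz
        have h2 := hsE' z hz
        rw [Set.mem_Ioo] at h1
        by_contra hcon
        push_neg at hcon
        have ha : a z ≤ s := hcon.1
        have hb : s ≤ b z := hcon.2
        have ha' : a z < s := lt_of_le_of_ne ha (Ne.symm (h2.1))
        have hb' : s < b z := lt_of_le_of_ne hb h2.2
        exact h1 ⟨ha', hb'⟩
      have hcst : ∀ z ∈ l, (fun u => φ z u) =ᶠ[nhds s] (fun _ => φ z s) := by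
        intro z hz
        rcases hout z hz with h | h
        · filter_upwards [Iio_mem_nhds h] with u hu
          rw [hφdef]
          simp only []
          rw [hcl0 z u (le_of_lt hu), hcl0 z s (le_of_lt h)]
        · filter_upwards [Ioi_mem_nhds h] with u hu
          rw [hφdef]
          simp only []
          rw [hcl2 z u (le_of_lt hu), hcl2 z s (le_of_lt h)]
      have hevψ : ψ =ᶠ[nhds s] (fun _ => ψ s) := by
        have := listProd_evEq l φ (fun z _ => φ z s) hcst
        exact this
      have hfs : f (x₀ + s • θ) = 0 := by
        apply hfzero
        intro z hz habs
        rcases hout z ((hmem z).2 hz) with h | h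
        · rw [abs_le] at habs
          simp only [hadef] at h
          linarith [habs.1]
        · rw [abs_le] at habs
          simp only [hbdef] at h
          linarith [habs.2]
      rw [hfs]
      have : ((0 : Matrix (Fin n) (Fin n) ℂ) * ψ s) i j = 0 := by
        rw [zero_mul]
        simp
      rw [this]
      exact (hasDerivAt_const s (ψ s i j)).congr_of_eventuallyEq
        (hevψ.mono (fun u hu => congrArg (fun m => m i j) hu))
  · -- s ≤ -R
    intro s hs
    rw [hψdef]
    simp only []
    apply List.prod_eq_one
    intro x hx
    obtain ⟨z, hz, rfl⟩ := List.mem_map.1 hx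
    apply hφ0 z s
    have h1 := hMle z hz
    have h2 : -|key z| ≤ key z := neg_abs_le _
    simp only [hadef]
    linarith
  · -- s ≥ R
    intro s hs
    have hφval : ∀ z ∈ l, φ z s =
        NormedSpace.exp (((2 * ρ z * w z : ℝ) : ℂ) • fdis z) := by
      intro z hz
      have h1 := hMle z hz
      have h2 : key z ≤ |key z| := le_abs_self _
      have hbs : b z ≤ s := by simp only [hbdef]; linarith
      rw [hφdef]
      simp only []
      rw [hcl2 z s hbs, hAdef]
      simp only []
      rw [smul_smul]
      congr 1
      push_cast
      ring
    rw [hψdef]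
    simp only []
    rw [List.map_congr_left hφval]
    exact (oprodBy_eq _ key S l hpair hmem).symm
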